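/- Let α ∈ (0,1], λ > 0, c > 0 and t > 0. Then ∫_{-ct}^{ct} [ ct ∑_{k=1}^∞ (λ/(2^α c^α))^{2k} (c²t² - x²)^{αk-1}/(Γ(αk) Γ(αk+1)) + ∑_{k=0}^∞ (λ/(2^α c^α))^{2k+1} (c²t² - x²)^{αk+(α-1)/2}/Γ(αk + (1+α)/2)² ] dx = E_{α,1}(λ t^α) - 1. In particular, the law of the fractional telegraph process, obtained by dividing this absolutely continuous density by E_{α,1}(λ t^α) and adding a point mass 1/(2 E_{α,1}(λ t^α)) at each of the points ±ct, is a probability distribution on [-ct, ct]. -/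

import Mathlib

open Real MeasureTheory

lemma gamma_conv {a x : ℝ} (ha : 0 < a) (ha1 : a ≤ 1) (hx : 1 ≤ x) :
    Real.Gamma x * (x + a - 1) ^ a ≤ Real.Gamma (x + a) := by
  have hx0 : (0:ℝ) < x := by linarith
  have hp : (0:ℝ) < x + a - 1 := by linarith
  have hq : (0:ℝ) < x + a := by linarith
  have hconv := Real.convexOn_log_Gamma
  have hcomb : a • (x + a - 1) + (1 - a) • (x + a) = x := by simp; ring
  have h2 := hconv.2 (Set.mem_Ioi.2 hp) (Set.mem_Ioi.2 hq) (le_of_lt ha)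
      (by linarith : (0:ℝ) ≤ 1 - a) (by ring)
  rw [hcomb] at h2
  simp only [Function.comp_apply, smul_eq_mul] at h2
  have hGq : Real.Gamma (x + a) = (x + a - 1) * Real.Gamma (x + a - 1) := by
    have := Real.Gamma_add_one (ne_of_gt hp)
    rw [show x + a - 1 + 1 = x + a by ring] at this
    exact this
  have hGp_pos := Real.Gamma_pos_of_pos hp
  have hGq_pos := Real.Gamma_pos_of_pos hq
  have hGx_pos := Real.Gamma_pos_of_pos hx0
  have hlogp : Real.log (Real.Gamma (x + a - 1)) =
      Real.log (Real.Gamma (x + a)) - Real.log (x + a - 1) := by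
    rw [hGq, Real.log_mul (ne_of_gt hp) (ne_of_gt hGp_pos)]; ring
  rw [hlogp] at h2
  have key : Real.log (Real.Gamma x) + a * Real.log (x + a - 1) ≤
      Real.log (Real.Gamma (x + a)) := by nlinarith
  have h3 := Real.exp_le_exp.2 key
  rw [Real.exp_log hGq_pos] at h3
  have h4 : Real.Gamma x * (x + a - 1) ^ a =
      Real.exp (Real.log (Real.Gamma x) + a * Real.log (x + a - 1)) := by
    rw [Real.exp_add, Real.exp_log hGx_pos, Real.rpow_def_of_pos hp, mul_comm a (Real.log _)]
  rw [h4]; exact h3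

lemma summable_ratio_gamma {z : ℝ} (hz : 0 ≤ z) (G : ℕ → ℝ) (hGpos : ∀ n, 0 < G n)
    (hG : ∀ᶠ n in Filter.atTop, 2 * z * G n ≤ G (n + 1)) :
    Summable (fun n => z ^ n / G n) := by
  apply summable_of_ratio_norm_eventually_le (r := 1/2) (by norm_num)
  filter_upwards [hG] with n h
  have h1 : (0:ℝ) ≤ z ^ (n+1) / G (n+1) := div_nonneg (pow_nonneg hz _) (hGpos _).le
  have h2 : (0:ℝ) ≤ z ^ n / G n := div_nonneg (pow_nonneg hz _) (hGpos _).le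
  rw [Real.norm_of_nonneg h1, Real.norm_of_nonneg h2]
  rw [show (1:ℝ)/2 * (z ^ n / G n) = z ^ n / (2 * G n) by ring,
    div_le_div_iff₀ (hGpos (n+1)) (by have := hGpos n; positivity)]
  have h3 := mul_le_mul_of_nonneg_left h (pow_nonneg hz n)
  calc z ^ (n+1) * (2 * G n) = z ^ n * (2 * z * G n) := by ring
    _ ≤ z ^ n * G (n + 1) := h3

lemma eventually_gamma_ratio {a b z : ℝ} (ha : 0 < a) (ha1 : a ≤ 1) (hb : 0 < b) (hz : 0 ≤ z) :
    ∀ᶠ n : ℕ in Filter.atTop,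
      2 * z * Real.Gamma (a * n + b) ≤ Real.Gamma (a * (n + 1) + b) := by
  set M : ℝ := (2 * z) ^ a⁻¹ with hM
  have hM0 : 0 ≤ M := Real.rpow_nonneg (by linarith) _
  obtain ⟨N, hN⟩ := exists_nat_ge (max ((1 - b) / a) ((M + 1 - a - b) / a))
  filter_upwards [Filter.eventually_ge_atTop N] with n hn
  have hnN : (N:ℝ) ≤ (n:ℝ) := Nat.cast_le.2 hn
  have h1 : (1 - b) / a ≤ (n:ℝ) := le_trans (le_trans (le_max_left _ _) hN) hnN
  have h2 : (M + 1 - a - b) / a ≤ (n:ℝ) := le_trans (le_trans (le_max_right _ _) hN) hnN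
  rw [div_le_iff₀ ha] at h1 h2
  have hx1 : 1 ≤ a * n + b := by nlinarith
  have hbase : M ≤ a * n + b + a - 1 := by nlinarith
  have hkey := gamma_conv ha ha1 hx1
  have hMa : 2 * z ≤ (a * n + b + a - 1) ^ a := by
    calc 2 * z = M ^ a := (Real.rpow_inv_rpow (by linarith) (ne_of_gt ha)).symm
    _ ≤ (a * n + b + a - 1) ^ a := Real.rpow_le_rpow hM0 hbase ha.le
  have hGpos : 0 < Real.Gamma (a * n + b) := Real.Gamma_pos_of_pos (by linarith)
  calc 2 * z * Real.Gamma (a * n + b) ≤ (a * n + b + a - 1) ^ a * Real.Gamma (a * n + b) :=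
        mul_le_mul_of_nonneg_right hMa hGpos.le
    _ ≤ Real.Gamma (a * n + b + a) := by
        rw [mul_comm]; exact hkey
    _ = Real.Gamma (a * (n + 1) + b) := by ring_nf

lemma summable_ml_one {a b z : ℝ} (ha : 0 < a) (ha1 : a ≤ 1) (hb : 0 < b) (hz : 0 ≤ z) :
    Summable (fun n : ℕ => z ^ n / Real.Gamma (a * n + b)) := by
  apply summable_ratio_gamma hz _ (fun n => Real.Gamma_pos_of_pos (by positivity))
  filter_upwards [eventually_gamma_ratio ha ha1 hb hz] with n h
  push_cast
  exact h

lemma summable_ml_two {a b1 b2 z : ℝ} (ha : 0 < a) (ha1 : a ≤ 1) (hb1 : 0 < b1)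
    (hb2 : 0 < b2) (hz : 0 ≤ z) :
    Summable (fun n : ℕ => z ^ n /
      (Real.Gamma (a * n + b1) * Real.Gamma (a * n + b2))) := by
  apply summable_ratio_gamma hz _
    (fun n => mul_pos (Real.Gamma_pos_of_pos (by positivity)) (Real.Gamma_pos_of_pos (by positivity)))
  have e1 := eventually_gamma_ratio ha ha1 hb1 hz
  have e2 := eventually_gamma_ratio ha ha1 hb2 (by norm_num : (0:ℝ) ≤ 1/2)
  filter_upwards [e1, e2] with n h1 h2
  push_cast
  have g1 : 0 < Real.Gamma (a * n + b1) := Real.Gamma_pos_of_pos (by positivity)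
  have g2 : 0 < Real.Gamma (a * n + b2) := Real.Gamma_pos_of_pos (by positivity)
  have g2' : Real.Gamma (a * n + b2) ≤ Real.Gamma (a * ((n:ℝ)+1) + b2) := by linarith
  calc 2 * z * (Real.Gamma (a * n + b1) * Real.Gamma (a * n + b2))
      = (2 * z * Real.Gamma (a * n + b1)) * Real.Gamma (a * n + b2) := by ring
    _ ≤ Real.Gamma (a * ((n:ℝ)+1) + b1) * Real.Gamma (a * ((n:ℝ)+1) + b2) := by
        apply mul_le_mul h1 g2' g2.le
        exact (Real.Gamma_pos_of_pos (by positivity)).le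

lemma betaJ {β : ℝ} (hβ : -1 < β) :
    ∫ u in (0:ℝ)..1, u ^ β * (1 - u) ^ β
      = Real.Gamma (β + 1) ^ 2 / Real.Gamma (2 * β + 2) := by
  have hs : 0 < (Complex.ofReal (β + 1)).re := by
    simpa using (by linarith : (0:ℝ) < β + 1)
  have key := Complex.Gamma_mul_Gamma_eq_betaIntegral hs hs
  have hbi : Complex.betaIntegral (Complex.ofReal (β + 1)) (Complex.ofReal (β + 1))
      = ((∫ u in (0:ℝ)..1, u ^ β * (1 - u) ^ β : ℝ) : ℂ) := by
    rw [Complex.betaIntegral, ← intervalIntegral.integral_ofReal]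
    apply intervalIntegral.integral_congr
    intro x hx
    rw [Set.uIcc_of_le (by norm_num : (0:ℝ) ≤ 1)] at hx
    have h0 : (0:ℝ) ≤ x := hx.1
    have h1 : (0:ℝ) ≤ 1 - x := by linarith [hx.2]
    have he : Complex.ofReal (β + 1) - 1 = Complex.ofReal β := by push_cast; ring
    dsimp only
    rw [he, ← Complex.ofReal_one, ← Complex.ofReal_sub, ← Complex.ofReal_cpow h0,
      ← Complex.ofReal_cpow h1, ← Complex.ofReal_mul]
  rw [hbi, Complex.Gamma_ofReal, ← Complex.ofReal_add,
    show (β + 1 + (β + 1) : ℝ) = 2 * β + 2 by ring, Complex.Gamma_ofReal,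
    ← Complex.ofReal_mul, ← Complex.ofReal_mul] at key
  have kreal := Complex.ofReal_inj.1 key
  have hG2 : Real.Gamma (2 * β + 2) ≠ 0 := (Real.Gamma_pos_of_pos (by linarith)).ne'
  rw [eq_div_iff hG2]
  rw [sq]
  linarith [kreal]

lemma intervalIntegrable_sq_rpow {L β : ℝ} (hL : 0 < L) (hβ : -1 < β) :
    IntervalIntegrable (fun x : ℝ => (L ^ 2 - x ^ 2) ^ β) volume (-L) L := by
  have h1 : IntervalIntegrable (fun x : ℝ => (L - x) ^ β) volume 0 L := by
    have h := (intervalIntegral.intervalIntegrable_rpow' (a := 0) (b := L) hβ).comp_sub_left L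
    simpa using h.symm
  have h2 : ContinuousOn (fun x : ℝ => (L + x) ^ β) (Set.uIcc 0 L) := by
    apply ContinuousOn.rpow_const (by fun_prop)
    intro x hx
    rw [Set.uIcc_of_le hL.le] at hx
    left
    have := hx.1
    positivity
  have h12 : IntervalIntegrable (fun x : ℝ => (L - x) ^ β * (L + x) ^ β) volume 0 L :=
    h1.mul_continuousOn h2
  have hpos : IntervalIntegrable (fun x : ℝ => (L ^ 2 - x ^ 2) ^ β) volume 0 L := by
    rw [intervalIntegrable_iff] at h12 ⊢
    apply h12.congr_fun _ measurableSet_uIoc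
    intro x hx
    rw [Set.uIoc_of_le hL.le] at hx
    have h0 : 0 ≤ L - x := by linarith [hx.2]
    have h0' : 0 ≤ L + x := by linarith [hx.1]
    dsimp only
    rw [show L ^ 2 - x ^ 2 = (L - x) * (L + x) by ring, Real.mul_rpow h0 h0']
  have hneg : IntervalIntegrable (fun x : ℝ => (L ^ 2 - x ^ 2) ^ β) volume (-L) 0 := by
    have h := ((IntervalIntegrable.iff_comp_neg (by simp)).mp hpos)
    simp only [neg_neg, neg_zero] at h
    have heq : (fun x : ℝ => (L ^ 2 - (-x) ^ 2) ^ β) = fun x : ℝ => (L ^ 2 - x ^ 2) ^ β := by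
      funext x; rw [neg_pow, pow_two]; ring_nf
    rw [heq] at h
    exact h.symm
  exact hneg.trans hpos

lemma integral_sq_rpow {L β : ℝ} (hL : 0 < L) (hβ : -1 < β) :
    ∫ x in (-L)..L, (L ^ 2 - x ^ 2) ^ β
      = L ^ (2 * β + 1) * (Real.sqrt π * Real.Gamma (β + 1) / Real.Gamma (β + 3 / 2)) := by
  have h2L : (2 * L) ≠ 0 := by positivity
  have subst := intervalIntegral.integral_comp_mul_add
    (f := fun y : ℝ => (L ^ 2 - y ^ 2) ^ β) (a := 0) (b := 1) h2L (-L)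
  simp only [mul_zero, zero_add, mul_one] at subst
  rw [show 2 * L + -L = L by ring] at subst
  have hI : ∫ x in (-L)..L, (L ^ 2 - x ^ 2) ^ β
      = (2 * L) * ∫ u in (0:ℝ)..1, (L ^ 2 - (2 * L * u + -L) ^ 2) ^ β := by
    rw [subst, smul_eq_mul, ← mul_assoc, mul_inv_cancel₀ h2L, one_mul]
  have hcongr : ∫ u in (0:ℝ)..1, (L ^ 2 - (2 * L * u + -L) ^ 2) ^ β
      = (4 * L ^ 2) ^ β * ∫ u in (0:ℝ)..1, u ^ β * (1 - u) ^ β := by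
    rw [← intervalIntegral.integral_const_mul]
    apply intervalIntegral.integral_congr
    intro u hu
    rw [Set.uIcc_of_le (by norm_num : (0:ℝ) ≤ 1)] at hu
    have h0 : 0 ≤ u := hu.1
    have h1 : 0 ≤ 1 - u := by linarith [hu.2]
    dsimp only
    rw [show L ^ 2 - (2 * L * u + -L) ^ 2 = (4 * L ^ 2) * (u * (1 - u)) by ring,
      Real.mul_rpow (by positivity) (mul_nonneg h0 h1), Real.mul_rpow h0 h1]
  rw [hI, hcongr, betaJ hβ]
  have dup := Real.Gamma_mul_Gamma_add_half (β + 1)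
  rw [show 2 * (β + 1) = 2 * β + 2 by ring, show β + 1 + 1 / 2 = β + 3 / 2 by ring] at dup
  have hG1 : 0 < Real.Gamma (β + 1) := Real.Gamma_pos_of_pos (by linarith)
  have hG2 : 0 < Real.Gamma (β + 3 / 2) := Real.Gamma_pos_of_pos (by linarith)
  have hG3 : 0 < Real.Gamma (2 * β + 2) := Real.Gamma_pos_of_pos (by linarith)
  have hL2 : (4 * L ^ 2 : ℝ) ^ β = (2:ℝ) ^ (2 * β) * L ^ (2 * β) := by
    rw [show (4 * L ^ 2 : ℝ) = (2 * L) ^ (2:ℕ) by ring, ← Real.rpow_natCast ((2*L)) 2,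
      ← Real.rpow_mul (by positivity), Real.mul_rpow (by norm_num) hL.le]
    norm_num [mul_comm]
  have hLL : L * L ^ (2 * β) = L ^ (2 * β + 1) := by
    rw [Real.rpow_add hL, Real.rpow_one]; ring
  have h2c : (2:ℝ) * (2:ℝ) ^ (2 * β) * (2:ℝ) ^ (1 - (2 * β + 2)) = 1 := by
    have hcomb : (2:ℝ) ^ (2 * β) * (2:ℝ) ^ (1 - (2 * β + 2))
        = (2:ℝ) ^ (2 * β + (1 - (2 * β + 2))) := (Real.rpow_add two_pos _ _).symm
    rw [mul_assoc, hcomb, show 2 * β + (1 - (2 * β + 2)) = -1 by ring,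
      Real.rpow_neg_one]
    norm_num
  rw [hL2]
  have key : Real.Gamma (β + 1) ^ 2 / Real.Gamma (2 * β + 2)
      = Real.Gamma (β + 1) * ((2:ℝ) ^ (1 - (2 * β + 2)) * Real.sqrt π) / Real.Gamma (β + 3/2) := by
    rw [eq_div_iff hG2.ne', div_mul_eq_mul_div, div_eq_iff hG3.ne']
    linear_combination Real.Gamma (β + 1) * dup
  rw [key]
  rw [show 2 * L * ((2:ℝ) ^ (2 * β) * L ^ (2 * β) *
      (Real.Gamma (β + 1) * ((2:ℝ) ^ (1 - (2 * β + 2)) * Real.sqrt π) / Real.Gamma (β + 3/2)))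
    = (2 * (2:ℝ) ^ (2 * β) * (2:ℝ) ^ (1 - (2 * β + 2))) * (L * L ^ (2 * β))
        * Real.Gamma (β + 1) * Real.sqrt π / Real.Gamma (β + 3/2) by ring,
    h2c, hLL]
  ring

lemma termB {a c t lam : ℝ} (ha : 0 < a) (hc : 0 < c) (ht : 0 < t) (hlam : 0 < lam)
    (m : ℕ) (hm : 0 < m) :
    ∫ x in (-(c * t))..(c * t),
      c * t * ((lam / ((2:ℝ) ^ a * c ^ a)) ^ (2 * m) * ((c * t) ^ 2 - x ^ 2) ^ (a * (m:ℝ) - 1) /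
        (Real.Gamma (a * m) * Real.Gamma (a * m + 1)))
      = (lam * t ^ a) ^ (2 * m) / Real.Gamma (2 * (a * m) + 1) := by
  have hL : 0 < c * t := mul_pos hc ht
  have ham : 0 < a * m := by positivity  -- uses hm? m:ℕ cast>0
  have hβ : (-1:ℝ) < a * m - 1 := by linarith
  set q : ℝ := lam / ((2:ℝ) ^ a * c ^ a) with hq
  have heq : (fun x : ℝ => c * t * (q ^ (2 * m) * ((c * t) ^ 2 - x ^ 2) ^ (a * (m:ℝ) - 1) /
        (Real.Gamma (a * m) * Real.Gamma (a * m + 1))))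
      = fun x : ℝ => (c * t * q ^ (2 * m) / (Real.Gamma (a * m) * Real.Gamma (a * m + 1))) *
          ((c * t) ^ 2 - x ^ 2) ^ (a * (m:ℝ) - 1) := by
    funext x; ring
  rw [heq, intervalIntegral.integral_const_mul, integral_sq_rpow hL hβ,
    show a * (m:ℝ) - 1 + 1 = a * m by ring, show a * (m:ℝ) - 1 + 3/2 = a * m + 1/2 by ring,
    show 2 * (a * (m:ℝ) - 1) + 1 = 2 * (a * m) - 1 by ring]
  have dup := Real.Gamma_mul_Gamma_add_half (a * m + 1/2)
  rw [show a * (m:ℝ) + 1/2 + 1/2 = a * m + 1 by ring,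
    show 2 * (a * (m:ℝ) + 1/2) = 2 * (a * m) + 1 by ring,
    show 1 - (2 * (a * (m:ℝ)) + 1) = -(2 * (a * m)) by ring] at dup
  have hA : 0 < Real.Gamma (a * m) := Real.Gamma_pos_of_pos ham
  have hB : 0 < Real.Gamma (a * m + 1) := Real.Gamma_pos_of_pos (by linarith)
  have hC : 0 < Real.Gamma (a * m + 1/2) := Real.Gamma_pos_of_pos (by linarith)
  have hD : 0 < Real.Gamma (2 * (a * m) + 1) := Real.Gamma_pos_of_pos (by linarith)
  have hS : 0 < Real.sqrt π := Real.sqrt_pos.2 Real.pi_pos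
  have hLR : c * t * (c * t) ^ (2 * (a * m) - 1) = (c * t) ^ (2 * (a * m)) := by
    nth_rewrite 1 [← Real.rpow_one (c * t)]
    rw [← Real.rpow_add hL]; ring_nf
  have hE2 : (2:ℝ) ^ (-(2 * (a * m))) * (2:ℝ) ^ (2 * (a * m)) = 1 := by
    rw [← Real.rpow_add two_pos]; norm_num
  have e1 : q ^ (2 * m) * (2:ℝ) ^ (2 * (a * m)) * (c * t) ^ (2 * (a * m))
      = (lam * t ^ a) ^ (2 * m) := by
    have h2 : (2:ℝ) ^ (2 * (a * m)) = ((2:ℝ) ^ a) ^ (2 * m : ℕ) := by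
      rw [← Real.rpow_natCast ((2:ℝ) ^ a) (2 * m), ← Real.rpow_mul (by norm_num)]
      congr 1; push_cast; ring
    have hct : ((c * t):ℝ) ^ (2 * (a * m)) = (c ^ a) ^ (2 * m : ℕ) * (t ^ a) ^ (2 * m : ℕ) := by
      rw [Real.mul_rpow hc.le ht.le, ← Real.rpow_natCast (c ^ a) (2 * m),
        ← Real.rpow_natCast (t ^ a) (2 * m), ← Real.rpow_mul hc.le, ← Real.rpow_mul ht.le]
      congr 2 <;> push_cast <;> ring
    rw [h2, hct, hq]
    rw [← mul_pow, ← mul_pow, ← mul_pow]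
    congr 1
    have h2a : (0:ℝ) < (2:ℝ) ^ a := Real.rpow_pos_of_pos two_pos a
    have hca : (0:ℝ) < c ^ a := Real.rpow_pos_of_pos hc a
    field_simp
  have hEinv : (2:ℝ) ^ (-(2 * (a * (m:ℝ)))) = ((2:ℝ) ^ (2 * (a * (m:ℝ))))⁻¹ :=
    Real.rpow_neg (by norm_num) _
  calc c * t * q ^ (2 * m) / (Real.Gamma (a * m) * Real.Gamma (a * m + 1)) *
        ((c * t) ^ (2 * (a * (m:ℝ)) - 1) * (√π * Real.Gamma (a * m) / Real.Gamma (a * m + 1/2)))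
      = (c * t * (c * t) ^ (2 * (a * (m:ℝ)) - 1)) * q ^ (2 * m) * √π *
          (Real.Gamma (a * m) / Real.Gamma (a * m)) /
          (Real.Gamma (a * m + 1) * Real.Gamma (a * m + 1/2)) := by ring
    _ = (c * t) ^ (2 * (a * (m:ℝ))) * q ^ (2 * m) * √π /
          (Real.Gamma (a * m + 1) * Real.Gamma (a * m + 1/2)) := by
        rw [hLR, div_self hA.ne']; ring
    _ = (c * t) ^ (2 * (a * (m:ℝ))) * q ^ (2 * m) * √π /
          (Real.Gamma (2 * (a * m) + 1) * 2 ^ (-(2 * (a * (m:ℝ)))) * √π) := by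
        rw [mul_comm (Real.Gamma (a * (m:ℝ) + 1)) (Real.Gamma (a * (m:ℝ) + 1/2)), dup]
    _ = (c * t) ^ (2 * (a * (m:ℝ))) * q ^ (2 * m) * (√π / √π) /
          (Real.Gamma (2 * (a * m) + 1) * 2 ^ (-(2 * (a * (m:ℝ))))) := by ring
    _ = (c * t) ^ (2 * (a * (m:ℝ))) * q ^ (2 * m) /
          (Real.Gamma (2 * (a * m) + 1) * 2 ^ (-(2 * (a * (m:ℝ))))) := by
        rw [div_self hS.ne']; ring
    _ = q ^ (2 * m) * 2 ^ (2 * (a * (m:ℝ))) * (c * t) ^ (2 * (a * (m:ℝ))) /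
          Real.Gamma (2 * (a * m) + 1) := by
        rw [hEinv, div_eq_mul_inv, mul_inv, inv_inv]; ring
    _ = (lam * t ^ a) ^ (2 * m) / Real.Gamma (2 * (a * m) + 1) := by rw [e1]

lemma termC {a c t lam : ℝ} (ha : 0 < a) (hc : 0 < c) (ht : 0 < t) (hlam : 0 < lam) (k : ℕ) :
    ∫ x in (-(c * t))..(c * t),
      (lam / ((2:ℝ) ^ a * c ^ a)) ^ (2 * k + 1) *
        ((c * t) ^ 2 - x ^ 2) ^ (a * (k:ℝ) + (a - 1) / 2) /
        Real.Gamma (a * (k:ℝ) + (1 + a) / 2) ^ 2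
      = (lam * t ^ a) ^ (2 * k + 1) / Real.Gamma (a * (2 * (k:ℝ) + 1) + 1) := by
  have hL : 0 < c * t := mul_pos hc ht
  have hak : (0:ℝ) ≤ a * k := by positivity
  have hβ : (-1:ℝ) < a * (k:ℝ) + (a - 1) / 2 := by linarith
  set q : ℝ := lam / ((2:ℝ) ^ a * c ^ a) with hq
  have heq : (fun x : ℝ => q ^ (2 * k + 1) * ((c * t) ^ 2 - x ^ 2) ^ (a * (k:ℝ) + (a - 1) / 2) /
        Real.Gamma (a * (k:ℝ) + (1 + a) / 2) ^ 2)
      = fun x : ℝ => (q ^ (2 * k + 1) / Real.Gamma (a * (k:ℝ) + (1 + a) / 2) ^ 2) *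
          ((c * t) ^ 2 - x ^ 2) ^ (a * (k:ℝ) + (a - 1) / 2) := by
    funext x; ring
  rw [heq, intervalIntegral.integral_const_mul, integral_sq_rpow hL hβ,
    show a * (k:ℝ) + (a - 1) / 2 + 1 = a * (k:ℝ) + (1 + a) / 2 by ring,
    show a * (k:ℝ) + (a - 1) / 2 + 3/2 = a * (k:ℝ) + (1 + a) / 2 + 1/2 by ring,
    show 2 * (a * (k:ℝ) + (a - 1) / 2) + 1 = a * (2 * (k:ℝ) + 1) by ring]
  have dup := Real.Gamma_mul_Gamma_add_half (a * (k:ℝ) + (1 + a) / 2)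
  rw [show 2 * (a * (k:ℝ) + (1 + a) / 2) = a * (2 * (k:ℝ) + 1) + 1 by ring,
    show 1 - (a * (2 * (k:ℝ) + 1) + 1) = -(a * (2 * (k:ℝ) + 1)) by ring] at dup
  have hC : 0 < Real.Gamma (a * (k:ℝ) + (1 + a) / 2) := Real.Gamma_pos_of_pos (by linarith)
  have hC2 : 0 < Real.Gamma (a * (k:ℝ) + (1 + a) / 2 + 1/2) := Real.Gamma_pos_of_pos (by linarith)
  have hD : 0 < Real.Gamma (a * (2 * (k:ℝ) + 1) + 1) := Real.Gamma_pos_of_pos (by positivity)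
  have hS : 0 < Real.sqrt π := Real.sqrt_pos.2 Real.pi_pos
  have hEinv : (2:ℝ) ^ (-(a * (2 * (k:ℝ) + 1))) = ((2:ℝ) ^ (a * (2 * (k:ℝ) + 1)))⁻¹ :=
    Real.rpow_neg (by norm_num) _
  have e1 : q ^ (2 * k + 1) * (2:ℝ) ^ (a * (2 * (k:ℝ) + 1)) * (c * t) ^ (a * (2 * (k:ℝ) + 1))
      = (lam * t ^ a) ^ (2 * k + 1) := by
    have h2 : (2:ℝ) ^ (a * (2 * (k:ℝ) + 1)) = ((2:ℝ) ^ a) ^ (2 * k + 1 : ℕ) := by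
      rw [← Real.rpow_natCast ((2:ℝ) ^ a) (2 * k + 1), ← Real.rpow_mul (by norm_num)]
      congr 1; push_cast; ring
    have hct : ((c * t):ℝ) ^ (a * (2 * (k:ℝ) + 1))
        = (c ^ a) ^ (2 * k + 1 : ℕ) * (t ^ a) ^ (2 * k + 1 : ℕ) := by
      rw [Real.mul_rpow hc.le ht.le, ← Real.rpow_natCast (c ^ a) (2 * k + 1),
        ← Real.rpow_natCast (t ^ a) (2 * k + 1), ← Real.rpow_mul hc.le, ← Real.rpow_mul ht.le]
      congr 2 <;> push_cast <;> ring
    rw [h2, hct, hq, ← mul_pow, ← mul_pow, ← mul_pow]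
    congr 1
    have h2a : (0:ℝ) < (2:ℝ) ^ a := Real.rpow_pos_of_pos two_pos a
    have hca : (0:ℝ) < c ^ a := Real.rpow_pos_of_pos hc a
    field_simp
  calc q ^ (2 * k + 1) / Real.Gamma (a * (k:ℝ) + (1 + a) / 2) ^ 2 *
        ((c * t) ^ (a * (2 * (k:ℝ) + 1)) *
          (√π * Real.Gamma (a * (k:ℝ) + (1 + a) / 2) / Real.Gamma (a * (k:ℝ) + (1 + a) / 2 + 1/2)))
      = (c * t) ^ (a * (2 * (k:ℝ) + 1)) * q ^ (2 * k + 1) * √π *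
          (Real.Gamma (a * (k:ℝ) + (1 + a) / 2) / Real.Gamma (a * (k:ℝ) + (1 + a) / 2)) /
          (Real.Gamma (a * (k:ℝ) + (1 + a) / 2) * Real.Gamma (a * (k:ℝ) + (1 + a) / 2 + 1/2)) := by
        ring
    _ = (c * t) ^ (a * (2 * (k:ℝ) + 1)) * q ^ (2 * k + 1) * √π /
          (Real.Gamma (a * (2 * (k:ℝ) + 1) + 1) * 2 ^ (-(a * (2 * (k:ℝ) + 1))) * √π) := by
        rw [div_self hC.ne', dup]; ring
    _ = (c * t) ^ (a * (2 * (k:ℝ) + 1)) * q ^ (2 * k + 1) * (√π / √π) /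
          (Real.Gamma (a * (2 * (k:ℝ) + 1) + 1) * 2 ^ (-(a * (2 * (k:ℝ) + 1)))) := by ring
    _ = (c * t) ^ (a * (2 * (k:ℝ) + 1)) * q ^ (2 * k + 1) /
          (Real.Gamma (a * (2 * (k:ℝ) + 1) + 1) * 2 ^ (-(a * (2 * (k:ℝ) + 1)))) := by
        rw [div_self hS.ne']; ring
    _ = q ^ (2 * k + 1) * 2 ^ (a * (2 * (k:ℝ) + 1)) * (c * t) ^ (a * (2 * (k:ℝ) + 1)) /
          Real.Gamma (a * (2 * (k:ℝ) + 1) + 1) := by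
        rw [hEinv, div_eq_mul_inv, mul_inv, inv_inv]; ring
    _ = (lam * t ^ a) ^ (2 * k + 1) / Real.Gamma (a * (2 * (k:ℝ) + 1) + 1) := by rw [e1]

/-- Two-parameter Mittag-Leffler function `E_{a,b}(z) = ∑ z^k / Γ(ak+b)`. -/
noncomputable def ML (a b z : ℝ) : ℝ := ∑' k : ℕ, z ^ k / Real.Gamma (a * (k : ℝ) + b)

theorem stmt8 (a lam c t : ℝ) (ha : 0 < a ∧ a ≤ 1) (hlam : 0 < lam) (hc : 0 < c)
    (ht : 0 < t) (p : ℝ → ℝ)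
    (hp : ∀ x : ℝ, p x =
      c * t * (∑' k : ℕ, (lam / ((2:ℝ) ^ a * c ^ a)) ^ (2 * (k + 1)) *
          (c ^ 2 * t ^ 2 - x ^ 2) ^ (a * ((k : ℝ) + 1) - 1) /
          (Real.Gamma (a * ((k : ℝ) + 1)) * Real.Gamma (a * ((k : ℝ) + 1) + 1)))
      + ∑' k : ℕ, (lam / ((2:ℝ) ^ a * c ^ a)) ^ (2 * k + 1) *
          (c ^ 2 * t ^ 2 - x ^ 2) ^ (a * (k : ℝ) + (a - 1) / 2) /
          Real.Gamma (a * (k : ℝ) + (1 + a) / 2) ^ 2) :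
    (∫ x in (-(c * t))..(c * t), p x) = ML a 1 (lam * t ^ a) - 1 ∧
    (∫ x in (-(c * t))..(c * t), p x / ML a 1 (lam * t ^ a))
      + 2 * (1 / (2 * ML a 1 (lam * t ^ a))) = 1 := by
  obtain ⟨ha0, ha1⟩ := ha
  have hL : 0 < c * t := mul_pos hc ht
  have hta : 0 < t ^ a := Real.rpow_pos_of_pos ht a
  have hz : 0 < lam * t ^ a := mul_pos hlam hta
  set z : ℝ := lam * t ^ a with hzdef
  have h2a : (0:ℝ) < (2:ℝ) ^ a := Real.rpow_pos_of_pos two_pos a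
  have hca : (0:ℝ) < c ^ a := Real.rpow_pos_of_pos hc a
  set q : ℝ := lam / ((2:ℝ) ^ a * c ^ a) with hqdef
  have hq : 0 < q := by rw [hqdef]; positivity
  set f : ℕ → ℝ := fun n => z ^ n / Real.Gamma (a * n + 1) with hfdef
  have hf_nonneg : ∀ n, 0 ≤ f n := by
    intro n
    rw [hfdef]
    exact div_nonneg (pow_nonneg hz.le _) (Real.Gamma_pos_of_pos (by positivity)).le
  have hf_summ : Summable f := summable_ml_one ha0 ha1 one_pos hz.le
  have hML : ML a 1 z = ∑' n, f n := by rw [ML, hfdef]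
  -- the two families of integrands
  set u : ℕ → ℝ → ℝ := fun k x =>
    c * t * (q ^ (2 * (k + 1)) * ((c * t) ^ 2 - x ^ 2) ^ (a * ((k : ℝ) + 1) - 1) /
      (Real.Gamma (a * ((k : ℝ) + 1)) * Real.Gamma (a * ((k : ℝ) + 1) + 1))) with hudef
  set v : ℕ → ℝ → ℝ := fun k x =>
    q ^ (2 * k + 1) * ((c * t) ^ 2 - x ^ 2) ^ (a * (k : ℝ) + (a - 1) / 2) /
      Real.Gamma (a * (k : ℝ) + (1 + a) / 2) ^ 2 with hvdef
  have hGu1 : ∀ k : ℕ, (0:ℝ) < Real.Gamma (a * ((k : ℝ) + 1)) := by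
    intro k; exact Real.Gamma_pos_of_pos (by positivity)
  have hGu2 : ∀ k : ℕ, (0:ℝ) < Real.Gamma (a * ((k : ℝ) + 1) + 1) := by
    intro k; exact Real.Gamma_pos_of_pos (by positivity)
  have hGv : ∀ k : ℕ, (0:ℝ) < Real.Gamma (a * (k : ℝ) + (1 + a) / 2) := by
    intro k; exact Real.Gamma_pos_of_pos (by positivity)
  have hβu : ∀ k : ℕ, (-1:ℝ) < a * ((k : ℝ) + 1) - 1 := by
    intro k; have : (0:ℝ) < a * ((k : ℝ) + 1) := by positivity
    linarith
  have hβv : ∀ k : ℕ, (-1:ℝ) < a * (k : ℝ) + (a - 1) / 2 := by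
    intro k; have : (0:ℝ) ≤ a * (k : ℝ) := by positivity
    linarith
  have hint1 : ∀ k : ℕ, IntervalIntegrable (u k) volume (-(c * t)) (c * t) := by
    intro k
    have heq : u k = fun x => (c * t * q ^ (2 * (k + 1)) /
        (Real.Gamma (a * ((k : ℝ) + 1)) * Real.Gamma (a * ((k : ℝ) + 1) + 1))) *
        ((c * t) ^ 2 - x ^ 2) ^ (a * ((k : ℝ) + 1) - 1) := by
      rw [hudef]; funext x; ring
    rw [heq]
    exact (intervalIntegrable_sq_rpow hL (hβu k)).const_mul _
  have hint2 : ∀ k : ℕ, IntervalIntegrable (v k) volume (-(c * t)) (c * t) := by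
    intro k
    have heq : v k = fun x => (q ^ (2 * k + 1) / Real.Gamma (a * (k : ℝ) + (1 + a) / 2) ^ 2) *
        ((c * t) ^ 2 - x ^ 2) ^ (a * (k : ℝ) + (a - 1) / 2) := by
      rw [hvdef]; funext x; ring
    rw [heq]
    exact (intervalIntegrable_sq_rpow hL (hβv k)).const_mul _
  set g : ℕ → ℝ → ℝ := fun k x => u k x + v k x with hgdef
  have hint : ∀ k : ℕ, IntervalIntegrable (g k) volume (-(c * t)) (c * t) :=
    fun k => (hint1 k).add (hint2 k)
  -- integral of each term
  have hval : ∀ k : ℕ, (∫ x in (-(c * t))..(c * t), g k x) = f (2 * k + 2) + f (2 * k + 1) := by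
    intro k
    rw [hgdef]
    rw [intervalIntegral.integral_add (hint1 k) (hint2 k)]
    congr 1
    · have hB := termB ha0 hc ht hlam (k + 1) k.succ_pos
      simp only [Nat.cast_add, Nat.cast_one] at hB
      rw [← hqdef] at hB
      rw [hudef, hB, hfdef]
      rw [show 2 * (k + 1) = 2 * k + 2 by ring]
      congr 2
      push_cast
      ring
    · have hC := termC ha0 hc ht hlam k
      rw [← hqdef] at hC
      rw [hvdef, hC, hfdef]
      congr 2
      push_cast
      ring
  -- nonnegativity on Ioo
  have hg_nonneg : ∀ k : ℕ, ∀ x ∈ Set.Ioo (-(c * t)) (c * t), 0 ≤ g k x := by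
    intro k x hx
    have hw : (0:ℝ) ≤ (c * t) ^ 2 - x ^ 2 := by nlinarith [hx.1, hx.2]
    rw [hgdef, hudef, hvdef]
    have h1 := Real.rpow_nonneg hw (a * ((k : ℝ) + 1) - 1)
    have h2 := Real.rpow_nonneg hw (a * (k : ℝ) + (a - 1) / 2)
    have := hGu1 k; have := hGu2 k; have := hGv k
    apply add_nonneg
    · apply mul_nonneg hL.le
      apply div_nonneg (mul_nonneg (pow_nonneg hq.le _) h1)
      positivity
    · apply div_nonneg (mul_nonneg (pow_nonneg hq.le _) h2)
      positivity
  -- pointwise tsum identity on Ioo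
  have hpt : ∀ x ∈ Set.Ioo (-(c * t)) (c * t), p x = ∑' k, g k x := by
    intro x hx
    have hw : (0:ℝ) < (c * t) ^ 2 - x ^ 2 := by nlinarith [hx.1, hx.2]
    set w : ℝ := (c * t) ^ 2 - x ^ 2 with hwdef
    have hwa : (0:ℝ) ≤ q ^ 2 * w ^ a := by positivity
    have hu_summ : Summable (fun k => u k x) := by
      have base := (summable_ml_two (b1 := a) (b2 := a + 1) ha0 ha1 ha0
        (by linarith) hwa).mul_left (c * t * (q ^ 2 * w ^ (a - 1)))
      apply Summable.congr base
      intro k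
      rw [hudef]
      dsimp only
      have e1 : q ^ (2 * (k + 1)) = (q ^ 2) ^ k * q ^ 2 := by ring
      have e2 : w ^ (a * ((k : ℝ) + 1) - 1) = (w ^ a) ^ k * w ^ (a - 1) := by
        rw [← Real.rpow_natCast (w ^ a) k, ← Real.rpow_mul hw.le,
          ← Real.rpow_add hw]
        congr 1; ring
      have e3 : Real.Gamma (a * (k:ℝ) + a) = Real.Gamma (a * ((k : ℝ) + 1)) := by
        congr 1; ring
      have e4 : Real.Gamma (a * (k:ℝ) + (a + 1)) = Real.Gamma (a * ((k : ℝ) + 1) + 1) := by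
        congr 1; ring
      rw [e1, e2, ← e3, ← e4]
      ring
    have hv_summ : Summable (fun k => v k x) := by
      have base := (summable_ml_two (b1 := (1 + a)/2) (b2 := (1 + a)/2) ha0 ha1
        (by linarith) (by linarith) hwa).mul_left (q * w ^ ((a - 1)/2))
      apply Summable.congr base
      intro k
      rw [hvdef]
      dsimp only
      have e1 : q ^ (2 * k + 1) = (q ^ 2) ^ k * q := by ring
      have e2 : w ^ (a * (k : ℝ) + (a - 1) / 2) = (w ^ a) ^ k * w ^ ((a - 1)/2) := by
        rw [← Real.rpow_natCast (w ^ a) k, ← Real.rpow_mul hw.le,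
          ← Real.rpow_add hw]
      rw [e1, e2, sq (Real.Gamma (a * (k:ℝ) + (1 + a) / 2))]
      ring
    rw [hp x]
    simp only [show c ^ 2 * t ^ 2 = (c * t) ^ 2 by ring]
    rw [← tsum_mul_left]
    exact (Summable.tsum_add hu_summ hv_summ).symm
  -- summability of term integrals
  have hIsum : Summable (fun k : ℕ => f (2 * k + 2) + f (2 * k + 1)) := by
    apply Summable.add
    · have hinj : Function.Injective (fun k : ℕ => 2 * k + 2) := by
        intro m n h; simp only [] at h; omega
      simpa [Function.comp_def] using hf_summ.comp_injective hinj
    · have hinj : Function.Injective (fun k : ℕ => 2 * k + 1) := by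
        intro m n h; simp only [] at h; omega
      simpa [Function.comp_def] using hf_summ.comp_injective hinj
  -- integrability over Ioo
  have hF_int : ∀ k : ℕ, IntegrableOn (g k) (Set.Ioo (-(c * t)) (c * t)) volume := by
    intro k
    have h1 : IntegrableOn (g k) (Set.Ioc (-(c * t)) (c * t)) volume := by
      rw [← Set.uIoc_of_le (by linarith : -(c * t) ≤ c * t)]
      exact (hint k).def'
    exact h1.mono_set Set.Ioo_subset_Ioc_self
  have hval' : ∀ k : ℕ, (∫ x in Set.Ioo (-(c * t)) (c * t), g k x)
      = f (2 * k + 2) + f (2 * k + 1) := by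
    intro k
    rw [← integral_Ioc_eq_integral_Ioo,
      ← intervalIntegral.integral_of_le (by linarith : -(c * t) ≤ c * t), hval k]
  have hF_norm : Summable (fun k : ℕ => ∫ x in Set.Ioo (-(c * t)) (c * t), ‖g k x‖) := by
    apply hIsum.congr
    intro k
    rw [← hval' k]
    apply setIntegral_congr_fun measurableSet_Ioo
    intro x hx
    exact (Real.norm_of_nonneg (hg_nonneg k x hx)).symm
  -- main computation
  have key : (∫ x in (-(c * t))..(c * t), p x) = (∑' n, f n) - 1 := by
    rw [intervalIntegral.integral_of_le (by linarith : -(c * t) ≤ c * t),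
      integral_Ioc_eq_integral_Ioo,
      setIntegral_congr_fun measurableSet_Ioo (fun x hx => hpt x hx),
      ← integral_tsum_of_summable_integral_norm hF_int hF_norm]
    have heq : ∀ k : ℕ, (∫ x in Set.Ioo (-(c * t)) (c * t), g k x)
        = f (2 * k + 2) + f (2 * k + 1) := hval'
    rw [tsum_congr heq]
    have he : Summable (fun k : ℕ => f (2 * k)) := by
      have hinj : Function.Injective (fun k : ℕ => 2 * k) := by intro m n h; simp only [] at h; omega
      simpa [Function.comp_def] using hf_summ.comp_injective hinj
    have ho : Summable (fun k : ℕ => f (2 * k + 1)) := by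
      have hinj : Function.Injective (fun k : ℕ => 2 * k + 1) := by intro m n h; simp only [] at h; omega
      simpa [Function.comp_def] using hf_summ.comp_injective hinj
    have he2 : Summable (fun k : ℕ => f (2 * k + 2)) := by
      have hinj : Function.Injective (fun k : ℕ => 2 * k + 2) := by intro m n h; simp only [] at h; omega
      simpa [Function.comp_def] using hf_summ.comp_injective hinj
    rw [Summable.tsum_add he2 ho]
    have hzero : ∑' k : ℕ, f (2 * k) = f 0 + ∑' k : ℕ, f (2 * k + 2) := by
      rw [Summable.tsum_eq_zero_add he]
      have h22 : ∀ k : ℕ, 2 * (k + 1) = 2 * k + 2 := fun k => by ring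
      simp only [h22, Nat.mul_zero]
    have hf0 : f 0 = 1 := by
      rw [hfdef]
      simp [Real.Gamma_one]
    have heo := tsum_even_add_odd he ho
    linarith [heo, hzero]
  constructor
  · rw [key, hML]
  · have hM1 : 1 ≤ ML a 1 z := by
      rw [hML]
      have h0 := Summable.le_tsum hf_summ 0 (fun j _ => hf_nonneg j)
      have hf0 : f 0 = 1 := by rw [hfdef]; simp [Real.Gamma_one]
      linarith
    have hM0 : ML a 1 z ≠ 0 := by linarith
    rw [intervalIntegral.integral_div, key]
    field_simp
    rw [hML]
    ring
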